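/- For an Archimedean vector lattice E with order completion E^δ, u(E) − u(E) = (u(E) ∪ l(E)) − (u(E) ∪ l(E)), where u(E) and l(E) are the sets of σ-upper and σ-lower elements of E in E^δ. -/

import Mathlib

/-- For an Archimedean vector lattice E with order completion E^δ,
u(E) − u(E) = (u(E) ∪ l(E)) − (u(E) ∪ l(E)). -/
theorem stmt1 {Eδ : Type*} [Lattice Eδ] [AddCommGroup Eδ] [Module ℝ Eδ]
    [CovariantClass Eδ Eδ (· + ·) (· ≤ ·)]
    (hsmul : ∀ (c : ℝ) (x y : Eδ), 0 ≤ c → x ≤ y → c • x ≤ c • y)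
    (harch : ∀ x y : Eδ, (∀ n : ℕ, n • x ≤ y) → x ≤ 0)
    (hcomp : ∀ S : Set Eδ, S.Nonempty → BddAbove S → ∃ b, IsLUB S b)
    (E : Set Eδ)
    (hadd : ∀ x ∈ E, ∀ y ∈ E, x + y ∈ E)
    (hsm : ∀ (c : ℝ), ∀ x ∈ E, c • x ∈ E)
    (hsupcl : ∀ x ∈ E, ∀ y ∈ E, x ⊔ y ∈ E)
    (hdense : ∀ x : Eδ, 0 < x → ∃ y ∈ E, 0 < y ∧ y ≤ x)
    (hmaj : ∀ x : Eδ, ∃ y ∈ E, x ≤ y)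
    (uE lE : Set Eδ)
    (huE : uE = {x : Eδ | ∃ u : ℕ → Eδ, (∀ n, u n ∈ E) ∧ Monotone u ∧ IsLUB (Set.range u) x})
    (hlE : lE = {x : Eδ | ∃ u : ℕ → Eδ, (∀ n, u n ∈ E) ∧ Antitone u ∧ IsGLB (Set.range u) x}) :
    {x : Eδ | ∃ a ∈ uE, ∃ b ∈ uE, x = a - b} =
      {x : Eδ | ∃ a ∈ uE ∪ lE, ∃ b ∈ uE ∪ lE, x = a - b} := by
  haveI : IsOrderedAddMonoid Eδ :=
    { add_le_add_left := fun a b h c => by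
        rw [add_comm a c, add_comm b c]; exact CovariantClass.elim c h }
  -- 0 ∈ E
  have h0E : (0 : Eδ) ∈ E := by
    obtain ⟨y, hy, -⟩ := hmaj 0
    have := hsm 0 y hy
    rwa [zero_smul] at this
  -- E is closed under negation
  have hnegE : ∀ x ∈ E, -x ∈ E := by
    intro x hx
    have := hsm (-1) x hx
    rwa [neg_one_smul] at this
  -- elements of E are in uE (constant sequences)
  have h0uE : (0 : Eδ) ∈ uE := by
    rw [huE]
    exact ⟨fun _ => 0, fun _ => h0E, monotone_const, by
      simp only [Set.range_const]; exact isLUB_singleton⟩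
  -- lE = -uE
  have hneg_lE : ∀ x ∈ lE, -x ∈ uE := by
    intro x hx
    rw [hlE] at hx
    rw [huE]
    obtain ⟨u, huE', huanti, huglb⟩ := hx
    refine ⟨fun n => -(u n), fun n => hnegE _ (huE' n), fun a b hab => neg_le_neg (huanti hab), ?_⟩
    have : IsLUB (-(Set.range u)) (-x) := huglb.neg
    convert this using 1
    ext z
    simp only [Set.mem_range, Set.mem_neg]
    constructor
    · rintro ⟨n, rfl⟩; exact ⟨n, by simp⟩
    · rintro ⟨n, hn⟩; exact ⟨n, by rw [hn]; simp⟩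
  -- uE is closed under addition
  have huE_add : ∀ a ∈ uE, ∀ b ∈ uE, a + b ∈ uE := by
    intro a ha b hb
    rw [huE] at ha hb ⊢
    obtain ⟨u, huE', humon, hulub⟩ := ha
    obtain ⟨v, hvE, hvmon, hvlub⟩ := hb
    refine ⟨fun n => u n + v n, fun n => hadd _ (huE' n) _ (hvE n), humon.add hvmon, ?_⟩
    constructor
    · rintro _ ⟨n, rfl⟩
      exact add_le_add (hulub.1 ⟨n, rfl⟩) (hvlub.1 ⟨n, rfl⟩)
    · intro z hz
      have key : ∀ n m, u n + v m ≤ z := by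
        intro n m
        calc u n + v m ≤ u (max n m) + v (max n m) :=
              add_le_add (humon (le_max_left n m)) (hvmon (le_max_right n m))
          _ ≤ z := hz ⟨max n m, rfl⟩
      have h1 : ∀ m, a ≤ z - v m := by
        intro m
        refine hulub.2 ?_
        rintro _ ⟨n, rfl⟩
        exact le_sub_iff_add_le.2 (key n m)
      have h2 : b ≤ z - a := by
        refine hvlub.2 ?_
        rintro _ ⟨m, rfl⟩
        have := le_sub_iff_add_le.1 (h1 m)
        rw [add_comm] at this
        exact le_sub_iff_add_le.2 this
      have := le_sub_iff_add_le.1 h2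
      rw [add_comm] at this
      exact this
  ext x
  constructor
  · rintro ⟨a, ha, b, hb, rfl⟩
    exact ⟨a, Or.inl ha, b, Or.inl hb, rfl⟩
  · rintro ⟨a, ha, b, hb, rfl⟩
    rcases ha with ha | ha <;> rcases hb with hb | hb
    · exact ⟨a, ha, b, hb, rfl⟩
    · exact ⟨a + -b, huE_add a ha _ (hneg_lE b hb), 0, h0uE, by abel⟩
    · exact ⟨0, h0uE, b + -a, huE_add b hb _ (hneg_lE a ha), by abel⟩
    · exact ⟨-b, hneg_lE b hb, -a, hneg_lE a ha, by abel⟩
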